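/- Let q be a prime power, k ≥ 3, and suppose B ∈ F_{q^k}^× is such that X^{q+1} - B·X + B splits completely over F_{q^k}, with roots z_1, ..., z_{q+1}. Then for a, b, c ∈ F_{q^k} with b ≠ a^q, c ≠ a·b and B = (b - a^q)^{q+1}/(c - a·b)^q, the set of roots of X^{q+1} + a·X^q + b·X + c in F_{q^k} is exactly { λ·z_i - a : 1 ≤ i ≤ q+1 }, where λ = (a·b - c)/(b - a^q). -/

import Mathlib

open Polynomial

/-- **Roots via the Bluher transformation.** Let `q = p^m` be a prime power, `k ≥ 3`, and
`F` the field with `q^k` elements.  Suppose `B ≠ 0` is such that `X^(q+1) - B·X + B`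
splits completely over `F`.  Then for `a, b, c ∈ F` with `b ≠ a^q`, `c ≠ a·b` and
`B = (b - a^q)^(q+1)/(c - a·b)^q`, the set of roots in `F` of
`X^(q+1) + a·X^q + b·X + c` is exactly `{ λ·z - a : z a root of X^(q+1) - B·X + B }`,
where `λ = (a·b - c)/(b - a^q)`. -/
theorem roots_via_bluher (p m q k : ℕ) (hp : p.Prime) (hm : 0 < m) (hq : q = p ^ m)
    (hk : 3 ≤ k) (F : Type*) [Field F] [Fintype F] [CharP F p]
    (hF : Fintype.card F = q ^ k)
    (B : F) (hB : B ≠ 0)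
    (hsplit : ((X ^ (q + 1) - C B * X + C B : Polynomial F).map (RingHom.id F)).Splits)
    (a b c : F) (hb : b ≠ a ^ q) (hc : c ≠ a * b)
    (hBval : B = (b - a ^ q) ^ (q + 1) / (c - a * b) ^ q) :
    {r : F | (X ^ (q + 1) + C a * X ^ q + C b * X + C c : Polynomial F).eval r = 0} =
      (fun z => (a * b - c) / (b - a ^ q) * z - a) ''
        {z : F | (X ^ (q + 1) - C B * X + C B : Polynomial F).eval z = 0} := by
  set u : F := b - a ^ q with hu
  set v : F := c - a * b with hv
  have hu0 : u ≠ 0 := sub_ne_zero.mpr hb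
  have hv0 : v ≠ 0 := sub_ne_zero.mpr hc
  set L : F := (a * b - c) / u with hLdef
  have habc : a * b - c ≠ 0 := sub_ne_zero.mpr (Ne.symm hc)
  have hL0 : L ≠ 0 := div_ne_zero habc hu0
  -- (-1)^(q+1) = 1 in F
  have hneg1 : ((-1 : F)) ^ (q + 1) = 1 := by
    rcases hp.eq_two_or_odd' with h2 | hodd
    · subst h2
      rw [CharTwo.neg_eq, one_pow]
    · have hqodd : Odd q := by rw [hq]; exact hodd.pow
      have : Even (q + 1) := Odd.add_one hqodd
      exact this.neg_one_pow
  have hLq1 : L ^ (q + 1) * B = v := by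
    have hLalt : L = -v / u := by rw [hLdef, hv]; ring_nf
    rw [hLalt, hBval, div_pow, neg_pow, hneg1, one_mul]
    field_simp
    rw [pow_succ]
  have hLu : L * u = -v := by
    rw [hLdef]
    field_simp
    rw [hv]
    ring
  -- key identity
  have key : ∀ z : F, (L * z - a) ^ (q + 1) + a * (L * z - a) ^ q + b * (L * z - a) + c
      = L ^ (q + 1) * (z ^ (q + 1) - B * z + B) := by
    intro z
    have hfrob : (L * z - a) ^ q = (L * z) ^ q - a ^ q := by
      rw [hq]; haveI := Fact.mk hp; exact sub_pow_char_pow (x := L * z) (y := a) m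
    rw [pow_succ (L * z - a), hfrob, mul_pow]
    have h1 : L ^ q * L * B = v := by rw [← pow_succ]; exact hLq1
    have h2 : L * (b - a ^ q) = -(c - a * b) := by
      have h := hLu
      rw [hu, hv] at h
      exact h
    rw [pow_succ L, pow_succ z]
    linear_combination (z - 1) * h1 + z * h2
  ext r
  simp only [Set.mem_setOf_eq, Set.mem_image, eval_add, eval_sub, eval_mul, eval_pow,
    eval_C, eval_X]
  constructor
  · intro hr
    refine ⟨(r + a) / L, ?_, ?_⟩
    · have hz : L * ((r + a) / L) - a = r := by field_simp; ring
      have hkey := key ((r + a) / L)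
      rw [hz, hr] at hkey
      exact (mul_eq_zero.mp hkey.symm).resolve_left (pow_ne_zero _ hL0)
    · field_simp; ring
  · rintro ⟨z, hz, rfl⟩
    rw [key z, hz, mul_zero]
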